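/- Dickson's conjecture implies the following stronger statement (Dickson's conjecture*): let Φ = {f_i(x) = a_i + b_i·x : i = 1,…,k} and Γ = {g_j(x) = c_j + d_j·x : j = 1,…,k'} with a_i, b_i, c_j, d_j ∈ ℤ, b_i ≥ 1, d_j ≥ 1, and suppose that neither g_j nor −g_j belongs to Φ for any j. If Φ satisfies Dickson's condition, then there exist infinitely many natural numbers m such that f_1(m),…,f_k(m) are all prime and g_1(m),…,g_{k'}(m) are all composite. -/

import Mathlib

open Finset

/-- Chinese remainder over a finite set of pairwise distinct primes. -/
private lemma crt_aux {ι : Type*} [DecidableEq ι] (q : ι → ℕ) (r : ι → ℤ) :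
    ∀ T : Finset ι, (∀ j ∈ T, (q j).Prime) →
      (∀ j₁ ∈ T, ∀ j₂ ∈ T, j₁ ≠ j₂ → q j₁ ≠ q j₂) →
      ∃ x : ℤ, ∀ j ∈ T, (q j : ℤ) ∣ (x - r j) := by
  intro T
  induction T using Finset.induction_on with
  | empty => exact fun _ _ => ⟨0, by simp⟩
  | @insert j₀ T hj₀ ih =>
    intro hprime hdist
    obtain ⟨x, hx⟩ := ih (fun j hj => hprime j (mem_insert_of_mem hj))
      (fun j₁ h₁ j₂ h₂ hne => hdist j₁ (mem_insert_of_mem h₁) j₂ (mem_insert_of_mem h₂) hne)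
    set P : ℤ := ∏ j ∈ T, (q j : ℤ) with hP
    have hco : IsCoprime ((q j₀ : ℕ) : ℤ) P := by
      apply IsCoprime.prod_right
      intro j hj
      have hne : j₀ ≠ j := fun h => hj₀ (h ▸ hj)
      have : Nat.Coprime (q j₀) (q j) :=
        (Nat.coprime_primes (hprime j₀ (mem_insert_self _ _))
          (hprime j (mem_insert_of_mem hj))).mpr
          (hdist j₀ (mem_insert_self _ _) j (mem_insert_of_mem hj) hne)
      exact Nat.isCoprime_iff_coprime.mpr this
    obtain ⟨u, v, huv⟩ := hco
    refine ⟨x + P * (v * (r j₀ - x)), ?_⟩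
    intro j hj
    rcases mem_insert.mp hj with h | h
    · subst h
      refine ⟨(x - r j) * u, ?_⟩
      linear_combination (-(x - r j)) * huv
    · have h1 : (q j : ℤ) ∣ x - r j := hx j h
      have h2 : (q j : ℤ) ∣ P := Finset.dvd_prod_of_mem (fun j => ((q j : ℕ) : ℤ)) h
      have : x + P * (v * (r j₀ - x)) - r j = (x - r j) + P * (v * (r j₀ - x)) := by ring
      rw [this]
      exact dvd_add h1 (h2.mul_right _)

/-- Dickson's conjecture: if the family of linear polynomials `aᵢ + bᵢ·x` (with `bᵢ ≥ 1`)
satisfies Dickson's condition (for every prime `p` there is `y` with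
`p ∤ ∏ᵢ (aᵢ + bᵢ·y)`), then there are infinitely many `m ∈ ℕ` such that all the values
`aᵢ + bᵢ·m` are prime. -/
def DicksonConjecture : Prop :=
  ∀ (k : ℕ) (a b : Fin k → ℤ), (∀ i, 1 ≤ b i) →
    (∀ p : ℕ, p.Prime → ∃ y : ℤ, ¬ ((p : ℤ) ∣ ∏ i, (a i + b i * y))) →
    ∀ N : ℕ, ∃ m : ℕ, N ≤ m ∧ ∀ i, Prime (a i + b i * (m : ℤ))

/-- Dickson's conjecture implies its stronger form (Dickson's conjecture*): given
`Φ = {aᵢ + bᵢ·x}` satisfying Dickson's condition and `Γ = {cⱼ + dⱼ·x}` with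
`±gⱼ ∉ Φ`, there are infinitely many `m ∈ ℕ` with all `fᵢ(m)` prime and all `gⱼ(m)`
composite. -/
theorem dickson_implies_dickson_star (hDickson : DicksonConjecture) :
    ∀ (k k' : ℕ) (a b : Fin k → ℤ) (c d : Fin k' → ℤ),
      (∀ i, 1 ≤ b i) → (∀ j, 1 ≤ d j) →
      (∀ i j, ¬(a i = c j ∧ b i = d j) ∧ ¬(a i = -(c j) ∧ b i = -(d j))) →
      (∀ p : ℕ, p.Prime → ∃ y : ℤ, ¬ ((p : ℤ) ∣ ∏ i, (a i + b i * y))) →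
      ∀ N : ℕ, ∃ m : ℕ, N ≤ m ∧
        (∀ i, Prime (a i + b i * (m : ℤ))) ∧
        (∀ j, ¬ Prime (c j + d j * (m : ℤ)) ∧ 1 < (c j + d j * (m : ℤ)).natAbs) := by
  intro k k' a b c d hb hd hne hcond N
  classical
  -- Step 1: the "proportional" (bad) case.
  have key_bad : ∀ (j : Fin k') (i : Fin k), a i * d j = b i * c j →
      ∃ t : ℤ, 2 ≤ t ∧ ∀ m : ℤ, c j + d j * m = t * (a i + b i * m) := by
    intro j i hprop
    have hb0 : (0:ℤ) < b i := lt_of_lt_of_le one_pos (hb i)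
    have hd0 : (0:ℤ) < d j := lt_of_lt_of_le one_pos (hd j)
    set e : ℕ := Int.gcd (b i) (d j) with he
    have hgcd_pos : 0 < e := Int.gcd_pos_of_ne_zero_left _ (ne_of_gt hb0)
    have hbe : ((e:ℤ)) ∣ b i := Int.gcd_dvd_left _ _
    have hde : ((e:ℤ)) ∣ d j := Int.gcd_dvd_right _ _
    set b' : ℤ := b i / (e:ℤ) with hb'
    set d' : ℤ := d j / (e:ℤ) with hd'
    have hco : Int.gcd b' d' = 1 := Int.gcd_div_gcd_div_gcd (by exact_mod_cast hgcd_pos)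
    have hbi : b i = (e:ℤ) * b' := (Int.mul_ediv_cancel' hbe).symm
    have hdj : d j = (e:ℤ) * d' := (Int.mul_ediv_cancel' hde).symm
    have he0 : ((e:ℤ)) ≠ 0 := by exact_mod_cast hgcd_pos.ne'
    have hb'pos : 0 < b' := by
      by_contra h
      push_neg at h
      nlinarith [hbi, hb0, (by exact_mod_cast hgcd_pos : (0:ℤ) < (e:ℤ))]
    have hd'pos : 0 < d' := by
      by_contra h
      push_neg at h
      nlinarith [hdj, hd0, (by exact_mod_cast hgcd_pos : (0:ℤ) < (e:ℤ))]
    have hpt : ∀ m : ℤ, b' * (c j + d j * m) = d' * (a i + b i * m) := by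
      intro m
      have h1 : b i * (c j + d j * m) = d j * (a i + b i * m) := by
        linear_combination (1 + 0*m) * hprop.symm + m * (mul_comm (b i) (d j))
      apply mul_left_cancel₀ he0
      calc (e:ℤ) * (b' * (c j + d j * m)) = b i * (c j + d j * m) := by rw [hbi]; ring
        _ = d j * (a i + b i * m) := h1
        _ = (e:ℤ) * (d' * (a i + b i * m)) := by rw [hdj]; ring
    have hdvd : ∀ m : ℤ, b' ∣ (a i + b i * m) := by
      intro m
      have hcop : IsCoprime b' d' := Int.isCoprime_iff_gcd_eq_one.mpr hco
      have : b' ∣ d' * (a i + b i * m) := ⟨c j + d j * m, (hpt m).symm⟩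
      exact hcop.dvd_of_dvd_mul_left this
    have hb'1 : b' = 1 := by
      by_contra h
      have h2 : (2:ℤ) ≤ b' := by omega
      have hne1 : b'.toNat ≠ 1 := by omega
      obtain ⟨p, hp, hpd⟩ := Nat.exists_prime_and_dvd hne1
      have hpz : (p:ℤ) ∣ b' := by
        have : ((p:ℤ)) ∣ (b'.toNat : ℤ) := Int.natCast_dvd_natCast.mpr hpd
        rwa [Int.toNat_of_nonneg hb'pos.le] at this
      obtain ⟨y, hy⟩ := hcond p hp
      exact hy ((hpz.trans (hdvd y)).trans
        (Finset.dvd_prod_of_mem (fun i => a i + b i * y) (mem_univ i)))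
    have hbe' : b i = (e:ℤ) := by rw [hbi, hb'1, mul_one]
    refine ⟨d', ?_, ?_⟩
    · -- d' ≥ 2
      by_contra hcon
      have hd1 : d' = 1 := by omega
      have hdb : d j = b i := by rw [hdj, hd1, mul_one]; exact hbe'.symm
      have hca : a i = c j := by
        have h2 := hprop
        rw [hdb] at h2
        exact mul_left_cancel₀ (ne_of_gt hb0) (by linear_combination h2)
      exact (hne i j).1 ⟨hca, hdb.symm⟩
    · intro m
      have := hpt m
      rw [hb'1, one_mul] at this
      exact this
  -- Setup for the good case.
  set Δ : Fin k → Fin k' → ℤ := fun i j => a i * d j - b i * c j with hΔ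
  set T : Finset (Fin k') := univ.filter (fun j => ∀ i, a i * d j ≠ b i * c j) with hT
  set B : ℕ := univ.sup (fun j : Fin k' =>
    max (d j).natAbs (univ.sup fun i : Fin k => (Δ i j).natAbs)) with hB
  set q : Fin k' → ℕ := fun j => Nat.nth Nat.Prime (B + 1 + j.val) with hq
  have hqprime : ∀ j, (q j).Prime := fun j => Nat.prime_nth_prime _
  have hqmono : StrictMono (Nat.nth Nat.Prime) := Nat.nth_strictMono Nat.infinite_setOf_prime
  have hqgt : ∀ j, B < q j := fun j => lt_of_lt_of_le (by omega) hqmono.le_apply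
  have hqinj : ∀ j₁ j₂ : Fin k', j₁ ≠ j₂ → q j₁ ≠ q j₂ := by
    intro j₁ j₂ hne12 heq
    have h1 := hqmono.injective heq
    exact hne12 (Fin.ext (by omega))
  have hsupB : ∀ j : Fin k', (max (d j).natAbs (univ.sup fun i : Fin k => (Δ i j).natAbs)) ≤ B :=
    fun j => Finset.le_sup (f := fun j : Fin k' =>
      max (d j).natAbs (univ.sup fun i : Fin k => (Δ i j).natAbs)) (mem_univ j)
  have hdB : ∀ j, (d j).natAbs ≤ B := fun j =>
    le_trans (le_max_left _ _) (hsupB j)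
  have hΔB : ∀ i j, (Δ i j).natAbs ≤ B := fun i j =>
    le_trans (le_trans (Finset.le_sup (f := fun i : Fin k => (Δ i j).natAbs) (mem_univ i))
      (le_max_right _ _)) (hsupB j)
  have hqd : ∀ j, ¬ ((q j : ℤ) ∣ d j) := by
    intro j hdvd
    have hd0 : (0:ℤ) < d j := lt_of_lt_of_le one_pos (hd j)
    have h1 : (q j : ℤ) ≤ d j := Int.le_of_dvd hd0 hdvd
    have h2 : d j = ((d j).natAbs : ℤ) := (Int.natAbs_of_nonneg hd0.le).symm
    have h3 := hdB j
    have h4 := hqgt j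
    omega
  -- residues r j with q j ∣ g j (r j)
  have hres : ∀ j : Fin k', ∃ r : ℤ, (q j : ℤ) ∣ (c j + d j * r) := by
    intro j
    haveI : Fact (q j).Prime := ⟨hqprime j⟩
    have hdz : ((d j : ℤ) : ZMod (q j)) ≠ 0 := by
      rw [Ne, ZMod.intCast_zmod_eq_zero_iff_dvd]
      exact hqd j
    set u : ZMod (q j) := (-(c j : ℤ) : ZMod (q j)) * ((d j : ℤ) : ZMod (q j))⁻¹ with hu
    refine ⟨(u.val : ℤ), ?_⟩
    rw [← ZMod.intCast_zmod_eq_zero_iff_dvd]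
    push_cast
    have huu : ((u.val : ℕ) : ZMod (q j)) = u := ZMod.natCast_rightInverse u
    rw [huu, hu]
    field_simp
    ring
  choose r hr using hres
  obtain ⟨x, hx⟩ := crt_aux q r T (fun j _ => hqprime j)
    (fun j₁ _ j₂ _ h => hqinj j₁ j₂ h)
  set M : ℕ := ∏ j ∈ T, q j with hM
  have hM0 : 0 < M := Finset.prod_pos (fun j _ => (hqprime j).pos)
  have hMz : ((M:ℤ)) ≠ 0 := by exact_mod_cast hM0.ne'
  set x' : ℤ := x % (M:ℤ) with hx'
  have hx'0 : 0 ≤ x' := Int.emod_nonneg x hMz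
  have hMdvd : (M:ℤ) ∣ (x - x') := by
    rw [hx', Int.emod_def]
    exact ⟨x / (M:ℤ), by ring⟩
  have hqM : ∀ j ∈ T, (q j : ℤ) ∣ (M:ℤ) := by
    intro j hj
    exact_mod_cast Int.natCast_dvd_natCast.mpr (Finset.dvd_prod_of_mem q hj)
  have hgood_div : ∀ j ∈ T, (q j : ℤ) ∣ (c j + d j * x') := by
    intro j hj
    have h1 : (q j : ℤ) ∣ (x' - r j) := by
      have h2 : (q j : ℤ) ∣ (x - x') := dvd_trans (hqM j hj) hMdvd
      have := dvd_sub (hx j hj) h2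
      have heq : x - r j - (x - x') = x' - r j := by ring
      rwa [heq] at this
    have : c j + d j * x' = (c j + d j * r j) + d j * (x' - r j) := by ring
    rw [this]
    exact dvd_add (hr j) (h1.mul_left _)
  have hgood_notf : ∀ j ∈ T, ∀ i, ¬ ((q j : ℤ) ∣ (a i + b i * x')) := by
    intro j hj i hdvd
    have hΔne : Δ i j ≠ 0 := by
      have := (mem_filter.mp hj).2 i
      simp only [hΔ]
      intro h
      exact this (by linarith [sub_eq_zero.mp h])
    have hdvdΔ : (q j : ℤ) ∣ Δ i j := by
      have h1 : d j * (a i + b i * x') - b i * (c j + d j * x') = Δ i j := by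
        simp only [hΔ]; ring
      rw [← h1]
      exact dvd_sub (hdvd.mul_left _) ((hgood_div j hj).mul_left _)
    have h2 : (q j : ℕ) ∣ (Δ i j).natAbs := by
      have := Int.natAbs_dvd_natAbs.mpr hdvdΔ
      simpa using this
    have h3 : (q j : ℕ) ≤ (Δ i j).natAbs :=
      Nat.le_of_dvd (Int.natAbs_pos.mpr hΔne) h2
    have h4 := hΔB i j
    have h5 := hqgt j
    omega
  -- the shifted family
  set A : Fin k → ℤ := fun i => a i + b i * x' with hA
  set Bc : Fin k → ℤ := fun i => b i * (M:ℤ) with hBc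
  have hBc1 : ∀ i, 1 ≤ Bc i := by
    intro i
    simp only [hBc]
    have h1 : (1:ℤ) ≤ (M:ℤ) := by exact_mod_cast hM0
    nlinarith [hb i]
  have hcond' : ∀ p : ℕ, p.Prime → ∃ y : ℤ, ¬ ((p : ℤ) ∣ ∏ i, (A i + Bc i * y)) := by
    intro p hp
    by_cases hpM : p ∣ M
    · -- p = q j for some j ∈ T
      obtain ⟨j, hjT, hpq⟩ : ∃ j ∈ T, p ∣ q j := by
        have := (Prime.dvd_finset_prod_iff hp.prime q).mp hpM
        exact this
      have hpeq : p = q j := (Nat.prime_dvd_prime_iff_eq hp (hqprime j)).mp hpq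
      refine ⟨0, ?_⟩
      intro hdvd
      obtain ⟨i, _, hi⟩ := (Prime.dvd_finset_prod_iff (Nat.prime_iff_prime_int.mp hp) _).mp hdvd
      have : (p:ℤ) ∣ A i := by simpa using hi
      rw [hpeq] at this
      exact hgood_notf j hjT i this
    · -- p coprime with M
      obtain ⟨y₀, hy₀⟩ := hcond p hp
      haveI : Fact p.Prime := ⟨hp⟩
      have hMp : ((M:ℕ) : ZMod p) ≠ 0 := by
        rw [Ne, ZMod.natCast_eq_zero_iff]
        exact hpM
      set yz : ZMod p := (((y₀ - x' : ℤ) : ZMod p)) * ((M:ℕ) : ZMod p)⁻¹ with hyz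
      refine ⟨(yz.val : ℤ), ?_⟩
      intro hdvd
      apply hy₀
      have hkey : (p:ℤ) ∣ (x' + (M:ℤ) * (yz.val : ℤ) - y₀) := by
        rw [← ZMod.intCast_zmod_eq_zero_iff_dvd]
        push_cast
        have huu : ((yz.val : ℕ) : ZMod p) = yz := ZMod.natCast_rightInverse yz
        have h1 : ((M:ℕ) : ZMod p) * ((M:ℕ) : ZMod p)⁻¹ = 1 := mul_inv_cancel₀ hMp
        rw [huu, hyz]
        push_cast
        linear_combination (((y₀ : ZMod p)) - ((x' : ZMod p))) * h1
      obtain ⟨i, _, hi⟩ := (Prime.dvd_finset_prod_iff (Nat.prime_iff_prime_int.mp hp) _).mp hdvd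
      have hstep : (p:ℤ) ∣ (a i + b i * y₀) := by
        have h1 : a i + b i * y₀ = (A i + Bc i * (yz.val : ℤ)) - b i * (x' + (M:ℤ) * (yz.val : ℤ) - y₀) := by
          simp only [hA, hBc]; ring
        rw [h1]
        exact dvd_sub hi (hkey.mul_left _)
      exact hstep.trans (Finset.dvd_prod_of_mem (fun i => a i + b i * y₀) (mem_univ i))
  -- choose the threshold
  set C : ℕ := N + (univ.sup fun j : Fin k' => q j + (c j).natAbs + 1) with hC
  obtain ⟨m', hm'C, hm'prime⟩ := hDickson k A Bc hBc1 hcond' C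
  refine ⟨x'.toNat + M * m', ?_, ?_, ?_⟩
  · -- N ≤ m
    calc N ≤ C := Nat.le_add_right _ _
      _ ≤ m' := hm'C
      _ ≤ M * m' := Nat.le_mul_of_pos_left m' hM0
      _ ≤ x'.toNat + M * m' := Nat.le_add_left _ _
  · -- primes
    intro i
    have hcast : ((x'.toNat + M * m' : ℕ) : ℤ) = x' + (M:ℤ) * (m' : ℕ) := by
      push_cast [Int.toNat_of_nonneg hx'0]
      ring
    rw [hcast]
    have := hm'prime i
    have heq : a i + b i * (x' + (M:ℤ) * (m':ℕ)) = A i + Bc i * (m':ℕ) := by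
      simp only [hA, hBc]; ring
    rw [heq]
    exact this
  · -- composites
    intro j
    set m : ℕ := x'.toNat + M * m' with hm
    have hcast : ((m : ℕ) : ℤ) = x' + (M:ℤ) * (m' : ℕ) := by
      rw [hm]
      push_cast [Int.toNat_of_nonneg hx'0]
      ring
    have hmbig : q j + (c j).natAbs + 1 ≤ m := by
      have h1 : q j + (c j).natAbs + 1 ≤ C :=
        le_trans (Finset.le_sup (f := fun j : Fin k' => q j + (c j).natAbs + 1) (mem_univ j))
          (Nat.le_add_left _ _)
      calc q j + (c j).natAbs + 1 ≤ C := h1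
        _ ≤ m' := hm'C
        _ ≤ M * m' := Nat.le_mul_of_pos_left m' hM0
        _ ≤ m := by rw [hm]; exact Nat.le_add_left _ _
    have hgm_big : (q j : ℤ) < c j + d j * (m:ℤ) := by
      have hdj1 : (1:ℤ) ≤ d j := hd j
      have hm0 : (0:ℤ) ≤ (m:ℤ) := Int.natCast_nonneg m
      have h1 : (m:ℤ) ≤ d j * (m:ℤ) := le_mul_of_one_le_left hm0 hdj1
      have h2 : -(((c j).natAbs : ℤ)) ≤ c j := by
        rcases Int.natAbs_eq (c j) with h | h <;> omega
      have h3 : ((q j : ℕ) : ℤ) + ((c j).natAbs : ℤ) + 1 ≤ (m:ℤ) := by exact_mod_cast hmbig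
      linarith
    by_cases hjT : j ∈ T
    · -- good case: q j divides g j (m) and g j (m) > q j
      have hdvd : (q j : ℤ) ∣ (c j + d j * (m:ℤ)) := by
        rw [hcast]
        have : c j + d j * (x' + (M:ℤ) * (m':ℕ)) =
            (c j + d j * x') + d j * ((M:ℤ) * (m':ℕ)) := by ring
        rw [this]
        exact dvd_add (hgood_div j hjT) (((hqM j hjT).mul_right _).mul_left _)
      have hq2 : 2 ≤ (q j : ℤ) := by exact_mod_cast (hqprime j).two_le
      constructor
      · intro hprime
        have hassoc : Associated ((q j : ℕ) : ℤ) (c j + d j * (m:ℤ)) :=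
          (Nat.prime_iff_prime_int.mp (hqprime j)).associated_of_dvd hprime hdvd
        have hnat : ((q j : ℕ) : ℤ).natAbs = (c j + d j * (m:ℤ)).natAbs :=
          Int.associated_iff_natAbs.mp hassoc
        have h1 : (c j + d j * (m:ℤ)) = (((c j + d j * (m:ℤ)).natAbs : ℕ) : ℤ) :=
          (Int.natAbs_of_nonneg (by linarith)).symm
        simp only [Int.natAbs_natCast] at hnat
        omega
      · have h1 : (c j + d j * (m:ℤ)) = (((c j + d j * (m:ℤ)).natAbs : ℕ) : ℤ) :=
          (Int.natAbs_of_nonneg (by linarith)).symm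
        omega
    · -- bad case
      have hex : ∃ i, a i * d j = b i * c j := by
        by_contra h
        push_neg at h
        exact hjT (mem_filter.mpr ⟨mem_univ j, h⟩)
      obtain ⟨i, hprop⟩ := hex
      obtain ⟨t, ht2, htid⟩ := key_bad j i hprop
      have hfp : Prime (a i + b i * (m:ℤ)) := by
        rw [hcast]
        have heq : a i + b i * (x' + (M:ℤ) * (m':ℕ)) = A i + Bc i * (m':ℕ) := by
          simp only [hA, hBc]; ring
        rw [heq]
        exact hm'prime i
      have hgid : c j + d j * (m:ℤ) = t * (a i + b i * (m:ℤ)) := htid (m:ℤ)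
      constructor
      · intro hprime
        rw [hgid] at hprime
        rcases hprime.irreducible.isUnit_or_isUnit rfl with h | h
        · rcases Int.isUnit_iff.mp h with h1 | h1 <;> omega
        · exact hfp.not_unit h
      · rw [hgid, Int.natAbs_mul]
        have h1 : 2 ≤ t.natAbs := by
          rcases Int.natAbs_eq t with h | h <;> omega
        have h2 : 2 ≤ (a i + b i * (m:ℤ)).natAbs :=
          (Int.prime_iff_natAbs_prime.mp hfp).two_le
        nlinarith
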